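/- Let (A_t)_{t=0}^T, (B_t)_{t=0}^T be integer staircase sequences and (x̄_t) a feasible 0-1 solution. Let t* ∈ {1,...,T} with x̄_{t*} = 0, A_{t*−1} < B_{t*}, and Σ_{i=1}^{t*−1} x̄_i = A_{t*−1}, and suppose t' = min{t ≥ t* : x̄_t = 1} exists. Then the sequence (x̂_t) defined by x̂_{t'} = 0, x̂_{t*} = 1, and x̂_t = x̄_t otherwise, is feasible. -/

import Mathlib

def Staircase (T : ℕ) (Z : ℕ → ℤ) : Prop :=
  Z 0 = 0 ∧ ∀ t ∈ Finset.Icc 1 T, Z (t - 1) ≤ Z t ∧ Z t ≤ Z (t - 1) + 1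

def Binary (T : ℕ) (x : ℕ → ℤ) : Prop :=
  ∀ t ∈ Finset.Icc 1 T, x t = 0 ∨ x t = 1

def Feasible (T : ℕ) (A B : ℕ → ℤ) (x : ℕ → ℤ) : Prop :=
  Binary T x ∧ ∀ t ∈ Finset.Icc 1 T,
    A t ≤ ∑ i ∈ Finset.Icc 1 t, x i ∧ ∑ i ∈ Finset.Icc 1 t, x i ≤ B t

noncomputable def cost (T : ℕ) (P : ℕ → ℝ) (x : ℕ → ℤ) : ℝ :=
  ∑ t ∈ Finset.Icc 1 T, P t * (x t : ℝ)

lemma stair_mono {T : ℕ} {Z : ℕ → ℤ} (h : Staircase T Z) {a b : ℕ}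
    (hab : a ≤ b) (hbT : b ≤ T) : Z a ≤ Z b := by
  induction b with
  | zero => have : a = 0 := Nat.le_zero.mp hab; simp [this]
  | succ n ih =>
    rcases Nat.lt_or_ge a (n + 1) with h1 | h2
    · have h3 : Z a ≤ Z n := ih (by omega) (by omega)
      have h4 := (h.2 (n + 1) (Finset.mem_Icc.mpr ⟨by omega, by omega⟩)).1
      simp only [Nat.add_sub_cancel] at h4
      omega
    · have : a = n + 1 := by omega
      simp [this]

theorem stmt10 (T : ℕ) (A B : ℕ → ℤ)
    (hA : Staircase T A) (hB : Staircase T B)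
    (xb : ℕ → ℤ) (hxb : Feasible T A B xb)
    (ts : ℕ) (hts : ts ∈ Finset.Icc 1 T) (hx0 : xb ts = 0)
    (hlt : A (ts - 1) < B ts)
    (hsum : ∑ i ∈ Finset.Icc 1 (ts - 1), xb i = A (ts - 1))
    (hne : {t : ℕ | ts ≤ t ∧ t ∈ Finset.Icc 1 T ∧ xb t = 1}.Nonempty)
    (t' : ℕ) (ht' : t' = sInf {t : ℕ | ts ≤ t ∧ t ∈ Finset.Icc 1 T ∧ xb t = 1}) :
    Feasible T A B (fun t => if t = t' then 0 else if t = ts then 1 else xb t) := by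
  obtain ⟨hbin, hfeas⟩ := hxb
  have hmem : t' ∈ {t : ℕ | ts ≤ t ∧ t ∈ Finset.Icc 1 T ∧ xb t = 1} :=
    ht' ▸ Nat.sInf_mem hne
  obtain ⟨hts', ht'T, hxt'⟩ := hmem
  have htsT := Finset.mem_Icc.mp hts
  have ht'TT := Finset.mem_Icc.mp ht'T
  have hne' : ts ≠ t' := by intro h; rw [h] at hx0; omega
  have hlt' : ts < t' := lt_of_le_of_ne hts' hne'
  have hzero : ∀ i, ts ≤ i → i < t' → xb i = 0 := by
    intro i h1 h2
    rcases hbin i (Finset.mem_Icc.mpr ⟨by omega, by omega⟩) with h | h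
    · exact h
    · exfalso
      have : t' ≤ i := ht' ▸ Nat.sInf_le ⟨h1, Finset.mem_Icc.mpr ⟨by omega, by omega⟩, h⟩
      omega
  set xh := fun t => if t = t' then (0 : ℤ) else if t = ts then 1 else xb t with hxh
  have hxhts : xh ts = 1 := by simp [hxh, hne']
  have hxht' : xh t' = 0 := by simp [hxh]
  have hxhoth : ∀ i, i ≠ ts → i ≠ t' → xh i = xb i := by
    intro i h1 h2
    simp [hxh, h1, h2]
  -- sum formulas
  have hSlt : ∀ t, t < ts → ∑ i ∈ Finset.Icc 1 t, xh i = ∑ i ∈ Finset.Icc 1 t, xb i := by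
    intro t ht
    refine Finset.sum_congr rfl fun i hi => ?_
    have := Finset.mem_Icc.mp hi
    exact hxhoth i (by omega) (by omega)
  have hSmid : ∀ t, ts ≤ t → t < t' →
      ∑ i ∈ Finset.Icc 1 t, xh i = ∑ i ∈ Finset.Icc 1 t, xb i + 1 := by
    intro t h1 h2
    have key : ∑ i ∈ Finset.Icc 1 t, (xh i - xb i) = 1 := by
      rw [Finset.sum_eq_single_of_mem ts (Finset.mem_Icc.mpr ⟨by omega, by omega⟩)]
      · rw [hxhts, hx0]; ring
      · intro i hi hine
        have := Finset.mem_Icc.mp hi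
        rw [hxhoth i hine (by omega)]; ring
    have hd : ∑ i ∈ Finset.Icc 1 t, (xh i - xb i)
        = ∑ i ∈ Finset.Icc 1 t, xh i - ∑ i ∈ Finset.Icc 1 t, xb i :=
      Finset.sum_sub_distrib _ _
    linarith
  have hmidsum : ∀ t, ts ≤ t → t < t' → ∑ i ∈ Finset.Icc 1 t, xb i = A (ts - 1) := by
    intro t h1 h2
    have h0 : ∀ m : ℕ, Finset.Icc 1 m = Finset.Ioc 0 m := fun m => Finset.Icc_add_one_left_eq_Ioc 0 m
    rw [h0]
    rw [← Finset.sum_Ioc_consecutive xb (Nat.zero_le (ts - 1)) (by omega : ts - 1 ≤ t)]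
    have hz : ∑ i ∈ Finset.Ioc (ts - 1) t, xb i = 0 := by
      refine Finset.sum_eq_zero fun i hi => ?_
      have := Finset.mem_Ioc.mp hi
      exact hzero i (by omega) (by omega)
    rw [hz, ← h0, hsum, add_zero]
  have hSge : ∀ t, t' ≤ t → ∑ i ∈ Finset.Icc 1 t, xh i = ∑ i ∈ Finset.Icc 1 t, xb i := by
    intro t h1
    have key : ∑ i ∈ Finset.Icc 1 t, (xh i - xb i) = 0 := by
      have h0 : ∀ m : ℕ, Finset.Icc 1 m = Finset.Ioc 0 m := fun m => Finset.Icc_add_one_left_eq_Ioc 0 m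
      rw [h0]
      rw [← Finset.sum_Ioc_consecutive _ (Nat.zero_le (t' - 1)) (by omega : t' - 1 ≤ t)]
      have e1 : ∑ i ∈ Finset.Ioc 0 (t' - 1), (xh i - xb i) = 1 := by
        rw [Finset.sum_eq_single_of_mem ts (Finset.mem_Ioc.mpr ⟨by omega, by omega⟩)]
        · rw [hxhts, hx0]; ring
        · intro i hi hine
          have := Finset.mem_Ioc.mp hi
          rw [hxhoth i hine (by omega)]; ring
      have e2 : ∑ i ∈ Finset.Ioc (t' - 1) t, (xh i - xb i) = -1 := by
        rw [Finset.sum_eq_single_of_mem t' (Finset.mem_Ioc.mpr ⟨by omega, by omega⟩)]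
        · rw [hxht', hxt']; ring
        · intro i hi hine
          have := Finset.mem_Ioc.mp hi
          rw [hxhoth i (by omega) hine]; ring
      rw [e1, e2]; ring
    have hd : ∑ i ∈ Finset.Icc 1 t, (xh i - xb i)
        = ∑ i ∈ Finset.Icc 1 t, xh i - ∑ i ∈ Finset.Icc 1 t, xb i :=
      Finset.sum_sub_distrib _ _
    linarith
  constructor
  · intro t ht
    simp only [hxh]
    split_ifs with h1 h2
    · left; rfl
    · right; rfl
    · exact hbin t ht
  · intro t ht
    have htT := Finset.mem_Icc.mp ht
    rcases Nat.lt_or_ge t ts with h1 | h1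
    · rw [hSlt t h1]; exact hfeas t ht
    · rcases Nat.lt_or_ge t t' with h2 | h2
      · rw [hSmid t h1 h2]
        have hf := hfeas t ht
        have hBm : B ts ≤ B t := stair_mono hB h1 htT.2
        have := hmidsum t h1 h2
        constructor
        · linarith [hf.1]
        · linarith
      · rw [hSge t h2]; exact hfeas t ht
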